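/- (Flatness invariance) Let Γ = (π₁,…,πₙ) be a path of activation patterns in {0,1}^N with r₂(Γ) > 0. Then χ(Γ) = 0 if and only if χ(−Γ) = 0, where −Γ = (πₙ,…,π₁) is the reversed path. -/

import Mathlib

/-- `r₁(Γ)`: maximal Hamming distance to the starting pattern along the first `n`
entries of the path `Γ`. -/
def r1 {N : ℕ} (n : ℕ) (Γ : ℕ → Fin N → Bool) : ℕ :=
  (Finset.range n).sup fun i => hammingDist (Γ 0) (Γ i)

/-- `r₂(Γ)`: total Hamming length of the path `Γ` of length `n`. -/
def r2 {N : ℕ} (n : ℕ) (Γ : ℕ → Fin N → Bool) : ℕ :=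
  ∑ i ∈ Finset.range (n - 1), hammingDist (Γ i) (Γ (i + 1))

/-- The space folding measure `χ(Γ) = 1 - r₁(Γ)/r₂(Γ)`. -/
noncomputable def chi {N : ℕ} (n : ℕ) (Γ : ℕ → Fin N → Bool) : ℝ :=
  1 - (r1 n Γ : ℝ) / (r2 n Γ : ℝ)

lemma chain_bound {N : ℕ} (Γ : ℕ → Fin N → Bool) :
    ∀ i, hammingDist (Γ 0) (Γ i) ≤ ∑ j ∈ Finset.range i, hammingDist (Γ j) (Γ (j + 1)) := by
  intro i
  induction i with
  | zero => simp
  | succ k ih =>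
      rw [Finset.sum_range_succ]
      calc hammingDist (Γ 0) (Γ (k + 1))
          ≤ hammingDist (Γ 0) (Γ k) + hammingDist (Γ k) (Γ (k + 1)) := hammingDist_triangle _ _ _
        _ ≤ _ := Nat.add_le_add_right ih _

lemma r1_le_r2 {N : ℕ} (n : ℕ) (Γ : ℕ → Fin N → Bool) : r1 n Γ ≤ r2 n Γ := by
  apply Finset.sup_le
  intro i hi
  rw [Finset.mem_range] at hi
  calc hammingDist (Γ 0) (Γ i) ≤ ∑ j ∈ Finset.range i, hammingDist (Γ j) (Γ (j + 1)) :=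
        chain_bound Γ i
    _ ≤ r2 n Γ := Finset.sum_le_sum_of_subset (Finset.range_subset_range.2 (by omega))

lemma chi_zero_iff {N : ℕ} (n : ℕ) (Γ : ℕ → Fin N → Bool) (h2 : 0 < r2 n Γ) :
    chi n Γ = 0 ↔ r1 n Γ = r2 n Γ := by
  have h2' : (r2 n Γ : ℝ) ≠ 0 := by positivity
  unfold chi
  rw [sub_eq_zero, eq_comm, div_eq_one_iff_eq h2']
  exact_mod_cast Iff.rfl

lemma endpoint_iff {N : ℕ} (n : ℕ) (Γ : ℕ → Fin N → Bool) (h2 : 0 < r2 n Γ) :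
    r1 n Γ = r2 n Γ ↔ hammingDist (Γ 0) (Γ (n - 1)) = r2 n Γ := by
  have hn : 2 ≤ n := by
    by_contra h
    have : n - 1 = 0 := by omega
    simp [r2, this] at h2
  constructor
  · intro h
    have hne : (Finset.range n).Nonempty := ⟨0, by simp; omega⟩
    obtain ⟨i, hi, hie⟩ := Finset.exists_mem_eq_sup (Finset.range n) hne
      (fun i => hammingDist (Γ 0) (Γ i))
    rw [Finset.mem_range] at hi
    have hr1 : r1 n Γ = hammingDist (Γ 0) (Γ i) := hie
    have hilen : i ≤ n - 1 := by omega
    have hpart : ∑ j ∈ Finset.range i, hammingDist (Γ j) (Γ (j + 1)) = r2 n Γ := by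
      have h1 : r2 n Γ ≤ ∑ j ∈ Finset.range i, hammingDist (Γ j) (Γ (j + 1)) := by
        rw [← h, hr1]; exact chain_bound Γ i
      have h2' : ∑ j ∈ Finset.range i, hammingDist (Γ j) (Γ (j + 1)) ≤ r2 n Γ :=
        Finset.sum_le_sum_of_subset (Finset.range_subset_range.2 hilen)
      omega
    have hrest : ∑ j ∈ Finset.Ico i (n - 1), hammingDist (Γ j) (Γ (j + 1)) = 0 := by
      have hsplit := Finset.sum_range_add_sum_Ico
        (fun j => hammingDist (Γ j) (Γ (j + 1))) hilen
      simp only [r2] at hpart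
      omega
    have hzero : ∀ j ∈ Finset.Ico i (n - 1), Γ j = Γ (j + 1) := by
      intro j hj
      have := (Finset.sum_eq_zero_iff).1 hrest j hj
      exact hammingDist_eq_zero.1 this
    have heq : ∀ m, i ≤ m → m ≤ n - 1 → Γ i = Γ m := by
      intro m
      induction m with
      | zero =>
          intro h1 h2
          have : i = 0 := by omega
          rw [this]
      | succ k ih =>
          intro h1 h2
          rcases Nat.eq_or_lt_of_le h1 with h | h
          · rw [h]
          · have hk : i ≤ k := by omega
            rw [ih hk (by omega)]
            exact hzero k (Finset.mem_Ico.2 ⟨hk, by omega⟩)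
    rw [← heq (n - 1) hilen le_rfl, ← hr1, h]
  · intro h
    have hle : hammingDist (Γ 0) (Γ (n - 1)) ≤ r1 n Γ :=
      Finset.le_sup (f := fun i => hammingDist (Γ 0) (Γ i)) (Finset.mem_range.2 (by omega))
    have := r1_le_r2 n Γ
    omega

lemma r2_rev {N : ℕ} (n : ℕ) (Γ : ℕ → Fin N → Bool) :
    r2 n (fun i => Γ (n - 1 - i)) = r2 n Γ := by
  unfold r2
  rw [← Finset.sum_range_reflect (fun j => hammingDist (Γ j) (Γ (j + 1))) (n - 1)]
  apply Finset.sum_congr rfl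
  intro i hi
  rw [Finset.mem_range] at hi
  have h1 : n - 1 - (i + 1) = n - 1 - 1 - i := by omega
  have h2 : n - 1 - i = n - 1 - 1 - i + 1 := by omega
  simp only [h1, h2]
  exact hammingDist_comm _ _

/-- Flatness invariance: for a path with `r₂(Γ) > 0`,
`χ(Γ) = 0` if and only if `χ(−Γ) = 0`, where `−Γ` is the reversed path. -/
theorem flatness_invariance {N : ℕ} (n : ℕ) (Γ : ℕ → Fin N → Bool)
    (h2 : 0 < r2 n Γ) :
    chi n Γ = 0 ↔ chi n (fun i => Γ (n - 1 - i)) = 0 := by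
  have h2' : 0 < r2 n (fun i => Γ (n - 1 - i)) := by rw [r2_rev]; exact h2
  rw [chi_zero_iff n Γ h2, chi_zero_iff _ _ h2', endpoint_iff n Γ h2,
    endpoint_iff _ _ h2', r2_rev]
  simp only [Nat.sub_self, Nat.sub_zero]
  rw [hammingDist_comm]
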